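/- Let d be a positive integer and let ω(d) denote the number of distinct prime divisors of d. Then the orthogonal group O(q_R) of the discriminant quadratic form q_R of the rank-one lattice R = ⟨-2d⟩, i.e. the group of additive automorphisms φ of ℤ/2dℤ satisfying q_R(φ(x)) = q_R(x) for all x, where q_R(x mod 2d) = -x²/(2d) mod 2ℤ (viewed as an element of ℚ/2ℤ), has order 2^{ω(d)}. -/

import Mathlib

/-- The discriminant quadratic form of the rank-one lattice `⟨-2d⟩`:
on the class of an integer `x` (represented by `ZMod.val`), it is
`-x²/(2d) mod 2ℤ`, viewed in `ℚ/2ℤ = AddCircle (2 : ℚ)`. -/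
noncomputable def qR (d : ℕ) (x : ZMod (2 * d)) : AddCircle (2 : ℚ) :=
  ((-(x.val : ℚ) ^ 2 / (2 * d) : ℚ) : AddCircle (2 : ℚ))

lemma eq_intCast_of_dvd {n : ℕ} [NeZero n] (x : ZMod n) (b : ℤ)
    (h : (n : ℤ) ∣ (x.val : ℤ) - b) : x = (b : ZMod n) := by
  have hv : ((x.val : ℤ) : ZMod n) = x := by push_cast; exact ZMod.natCast_rightInverse x
  rw [← hv, ZMod.intCast_eq_intCast_iff]
  exact Int.ModEq.symm (Int.modEq_iff_dvd.mpr h)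

lemma sqrt1_iff {n : ℕ} [NeZero n] (x : ZMod n) :
    x ^ 2 = 1 ↔ (n : ℤ) ∣ ((x.val : ℤ) - 1) * ((x.val : ℤ) + 1) := by
  rw [show ((x.val:ℤ)-1)*((x.val:ℤ)+1) = (x.val:ℤ)^2 - 1 by ring,
    ← ZMod.intCast_zmod_eq_zero_iff_dvd]
  push_cast
  rw [ZMod.natCast_rightInverse x, sub_eq_zero]

lemma natCast_inj_lt {n a b : ℕ} (ha : a < n) (hb : b < n)
    (h : ((a:ℕ) : ZMod n) = b) : a = b := by
  haveI : NeZero n := ⟨by omega⟩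
  rw [← ZMod.val_cast_of_lt ha, ← ZMod.val_cast_of_lt hb, h]

lemma sqrt1_odd_prime_pow {p e : ℕ} (hp : p.Prime) (hp2 : p ≠ 2) (he : 0 < e)
    (x : ZMod (p^e)) : x ^ 2 = 1 ↔ x = 1 ∨ x = -1 := by
  haveI : NeZero (p^e) := ⟨pow_ne_zero e hp.ne_zero⟩
  constructor
  · intro hx
    rw [sqrt1_iff] at hx
    set a : ℤ := (x.val : ℤ) with ha
    have hpZ : Prime (p : ℤ) := Nat.prime_iff_prime_int.mp hp
    have hnot : ¬ ((p:ℤ) ∣ a - 1 ∧ (p:ℤ) ∣ a + 1) := by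
      rintro ⟨h1, h2⟩
      have : (p:ℤ) ∣ 2 := by have := dvd_sub h2 h1; simpa using this
      rw [show ((2:ℤ)) = ((2:ℕ):ℤ) by norm_num, Int.natCast_dvd_natCast] at this
      exact hp2 ((Nat.prime_dvd_prime_iff_eq hp Nat.prime_two).mp this)
    push_cast at hx
    by_cases h1 : (p:ℤ) ∣ a + 1
    · have h2 : ¬ (p:ℤ) ∣ a - 1 := fun h => hnot ⟨h, h1⟩
      have hco : IsCoprime ((p:ℤ)^e) (a - 1) := (hpZ.coprime_iff_not_dvd.mpr h2).pow_left
      have hd : ((p:ℤ)^e) ∣ a + 1 := hco.dvd_of_dvd_mul_left hx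
      right
      have := eq_intCast_of_dvd x (-1) (by push_cast; rw [show a - -1 = a + 1 by ring]; exact hd)
      simpa using this
    · have hco : IsCoprime ((p:ℤ)^e) (a + 1) := (hpZ.coprime_iff_not_dvd.mpr h1).pow_left
      have hd : ((p:ℤ)^e) ∣ a - 1 := hco.dvd_of_dvd_mul_right hx
      left
      have := eq_intCast_of_dvd x 1 (by push_cast; exact hd)
      simpa using this
  · rintro (rfl | rfl) <;> ring

lemma sqrt1_two_pow {e : ℕ} (he : 3 ≤ e) (x : ZMod (2^e)) :
    x ^ 2 = 1 ↔ x = 1 ∨ x = -1 ∨ x = ((2^(e-1) : ℕ) : ZMod (2^e)) + 1 ∨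
      x = ((2^(e-1) : ℕ) : ZMod (2^e)) - 1 := by
  haveI : NeZero (2^e) := ⟨pow_ne_zero e two_ne_zero⟩
  set c : ZMod (2^e) := ((2^(e-1) : ℕ) : ZMod (2^e)) with hc
  have hc2 : 2 * c = 0 := by
    rw [hc, show (2 : ZMod (2^e)) = ((2:ℕ) : ZMod (2^e)) by push_cast; rfl, ← Nat.cast_mul,
      show (2 * 2^(e-1) : ℕ) = 2^e by rw [← pow_succ']; congr 1; omega, ZMod.natCast_self]
  have hcsq : c * c = 0 := by
    rw [hc, ← Nat.cast_mul, ZMod.natCast_eq_zero_iff, ← pow_add]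
    exact pow_dvd_pow 2 (by omega)
  have hpow : (2:ℤ)^e = 2^(e-2)*4 := by
    rw [show e = (e-2)+2 by omega, pow_add]; norm_num
  have hpow1 : (2:ℤ)^(e-1) = 2^(e-2)*2 := by
    rw [show e - 1 = (e-2)+1 by omega, pow_add]; norm_num
  constructor
  · intro hx
    rw [sqrt1_iff] at hx
    set a : ℤ := (x.val : ℤ) with ha
    push_cast at hx
    have hcast : ∀ b : ℤ, (2^e : ℤ) ∣ a - b → x = (b : ZMod (2^e)) := fun b hb =>
      eq_intCast_of_dvd x b (by push_cast; exact hb)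
    rcases Int.even_or_odd a with ⟨k, hk⟩ | ⟨k, hk⟩
    · exfalso
      obtain ⟨t, ht⟩ := dvd_trans (dvd_pow_self 2 (by omega : e ≠ 0)) hx
      have hKt : 4*(k*k) - 1 = 2*t := by rw [hk] at ht; linear_combination ht
      omega
    · have hxx : (4 * 2^(e-2) : ℤ) ∣ 4*(k*(k+1)) := by
        rw [show (4*(k*(k+1)) : ℤ) = (a-1)*(a+1) by rw [hk]; ring, show (4 * 2^(e-2) : ℤ) = 2^e
          by rw [hpow]; ring]
        exact hx
      have hdk : (2:ℤ)^(e-2) ∣ k*(k+1) :=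
        (mul_dvd_mul_iff_left (by norm_num : (4:ℤ) ≠ 0)).mp hxx
      rcases Int.even_or_odd k with ⟨j, hj⟩ | ⟨j, hj⟩
      · have hodd : ¬ (2:ℤ) ∣ k + 1 := by rintro ⟨t, ht⟩; omega
        have hco : IsCoprime ((2:ℤ)^(e-2)) (k+1) :=
          (Int.prime_two.coprime_iff_not_dvd.mpr hodd).pow_left
        obtain ⟨s, hs⟩ := hco.dvd_of_dvd_mul_right hdk
        rcases Int.even_or_odd s with ⟨j', hj'⟩ | ⟨j', hj'⟩
        · left
          have h1 := hcast 1 ⟨j', (by rw [hpow]; linear_combination hk + 2*hs + (2*(2:ℤ)^(e-2))*hj')⟩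
          simpa using h1
        · right; right; left
          have h1 := hcast ((2:ℤ)^(e-1) + 1) ⟨j', (by rw [hpow, hpow1]; linear_combination hk + 2*hs + (2*(2:ℤ)^(e-2))*hj')⟩
          rw [h1]; push_cast [hc]; ring
      · have hodd : ¬ (2:ℤ) ∣ k := by rintro ⟨t, ht⟩; omega
        have hco : IsCoprime ((2:ℤ)^(e-2)) k :=
          (Int.prime_two.coprime_iff_not_dvd.mpr hodd).pow_left
        obtain ⟨s, hs⟩ := hco.dvd_of_dvd_mul_left hdk
        rcases Int.even_or_odd s with ⟨j', hj'⟩ | ⟨j', hj'⟩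
        · right; left
          have h1 := hcast (-1) ⟨j', (by rw [hpow]; linear_combination hk + 2*hs + (2*(2:ℤ)^(e-2))*hj')⟩
          simpa using h1
        · right; right; right
          have h1 := hcast ((2:ℤ)^(e-1) - 1) ⟨j', (by rw [hpow, hpow1]; linear_combination hk + 2*hs + (2*(2:ℤ)^(e-2))*hj')⟩
          rw [h1]; push_cast [hc]; ring
  · rintro (rfl | rfl | rfl | rfl)
    · ring
    · ring
    · have h2 : (c+1)^2 = c*c + 2*c + 1 := by ring
      rw [h2, hcsq, hc2]; ring
    · have h2 : (c-1)^2 = c*c - 2*c + 1 := by ring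
      rw [h2, hcsq, hc2]; ring

noncomputable def sqrt1Card (n : ℕ) : ℕ := Nat.card {x : ZMod n // x^2 = 1}

lemma sqrt1Card_four : sqrt1Card 4 = 2 := by
  rw [sqrt1Card, Nat.card_eq_fintype_card]; decide

lemma sqrt1Card_mul {m n : ℕ} (h : Nat.Coprime m n) :
    sqrt1Card (m * n) = sqrt1Card m * sqrt1Card n := by
  unfold sqrt1Card
  rw [← Nat.card_prod]
  refine Nat.card_congr <|
    ((ZMod.chineseRemainder h).toEquiv.subtypeEquiv (fun x => ?_)).trans
      (Equiv.subtypeProdEquivProd)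
  have key : (ZMod.chineseRemainder h).toEquiv x = (ZMod.chineseRemainder h) x := rfl
  rw [key]
  constructor
  · intro hx
    have : (ZMod.chineseRemainder h) x ^ 2 = 1 := by rw [← map_pow, hx, map_one]
    exact ⟨congrArg Prod.fst this, congrArg Prod.snd this⟩
  · rintro ⟨h1, h2⟩
    apply (ZMod.chineseRemainder h).injective
    rw [map_pow, map_one]
    exact Prod.ext h1 h2

lemma sqrt1Card_odd_prime_pow {p e : ℕ} (hp : p.Prime) (hp2 : p ≠ 2) (he : 0 < e) :
    sqrt1Card (p^e) = 2 := by
  have hlt : 2 < p^e := by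
    have h3 : 3 ≤ p := by rcases hp.two_le.lt_or_eq with h | h; omega; omega
    calc 2 < 3 := by norm_num
    _ ≤ p := h3
    _ = p^1 := (pow_one p).symm
    _ ≤ p^e := Nat.pow_le_pow_right (by omega) he
  haveI : NeZero (p^e) := ⟨by omega⟩
  haveI : Fact (2 < p^e) := ⟨hlt⟩
  have hset : {x : ZMod (p^e) | x^2 = 1} = {1, -1} :=
    Set.ext fun x => sqrt1_odd_prime_pow hp hp2 he x
  calc Nat.card {x : ZMod (p^e) // x^2 = 1}
      = ({x : ZMod (p^e) | x^2 = 1} : Set _).ncard := (Nat.card_coe_set_eq _).symm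
    _ = ({1, -1} : Set (ZMod (p^e))).ncard := by rw [hset]
    _ = 2 := Set.ncard_pair (Ne.symm ZMod.neg_one_ne_one)

lemma sqrt1Card_two_pow {e : ℕ} (he : 3 ≤ e) : sqrt1Card (2^e) = 4 := by
  have hN4 : 4 ≤ 2^(e-1) := by
    calc (4:ℕ) = 2^2 := by norm_num
    _ ≤ 2^(e-1) := Nat.pow_le_pow_right (by omega) (by omega)
  have h2e : 2^e = 2*2^(e-1) := by rw [← pow_succ']; congr 1; omega
  haveI : NeZero (2^e) := ⟨by omega⟩
  set c : ZMod (2^e) := ((2^(e-1) : ℕ) : ZMod (2^e)) with hc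
  have hm1 : (-1 : ZMod (2^e)) = ((2^e - 1 : ℕ) : ZMod (2^e)) := by
    rw [Nat.cast_sub (by omega), ZMod.natCast_self]; push_cast; ring
  have hcp : c + 1 = ((2^(e-1) + 1 : ℕ) : ZMod (2^e)) := by push_cast [hc]; ring
  have hcm : c - 1 = ((2^(e-1) - 1 : ℕ) : ZMod (2^e)) := by
    rw [Nat.cast_sub (by omega), hc]; push_cast; ring
  have h1 : (1 : ZMod (2^e)) = ((1 : ℕ) : ZMod (2^e)) := by push_cast; ring
  have ne12 : (1 : ZMod (2^e)) ≠ -1 := by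
    rw [hm1, h1]; intro h; have := natCast_inj_lt (by omega) (by omega) h; omega
  have ne13 : (1 : ZMod (2^e)) ≠ c + 1 := by
    rw [hcp, h1]; intro h; have := natCast_inj_lt (by omega) (by omega) h; omega
  have ne14 : (1 : ZMod (2^e)) ≠ c - 1 := by
    rw [hcm, h1]; intro h; have := natCast_inj_lt (by omega) (by omega) h; omega
  have ne23 : (-1 : ZMod (2^e)) ≠ c + 1 := by
    rw [hm1, hcp]; intro h; have := natCast_inj_lt (by omega) (by omega) h; omega
  have ne24 : (-1 : ZMod (2^e)) ≠ c - 1 := by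
    rw [hm1, hcm]; intro h; have := natCast_inj_lt (by omega) (by omega) h; omega
  have ne34 : c + 1 ≠ c - 1 := by
    rw [hcp, hcm]; intro h; have := natCast_inj_lt (by omega) (by omega) h; omega
  have hset : {x : ZMod (2^e) | x^2 = 1} = {1, -1, c+1, c-1} :=
    Set.ext fun x => sqrt1_two_pow he x
  calc Nat.card {x : ZMod (2^e) // x^2 = 1}
      = ({x : ZMod (2^e) | x^2 = 1} : Set _).ncard := (Nat.card_coe_set_eq _).symm
    _ = ({1, -1, c+1, c-1} : Set (ZMod (2^e))).ncard := by rw [hset]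
    _ = 4 := by
        rw [Set.ncard_insert_of_notMem (by simp [ne12, ne13, ne14]) (Set.toFinite _),
          Set.ncard_insert_of_notMem (by simp [ne23, ne24]) (Set.toFinite _),
          Set.ncard_pair ne34]

lemma sqrt1Card_four_mul (d : ℕ) : 0 < d →
    sqrt1Card (4*d) = 2^(d.primeFactors.card + 1) := by
  induction d using Nat.strong_induction_on with
  | _ d ih =>
    intro hd
    by_cases hodd : ∀ p ∈ d.primeFactors, p = 2
    · set a := d.factorization 2 with ha
      have hdc : 2^a * ordCompl[2] d = d := Nat.ordProj_mul_ordCompl_eq_self d 2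
      have hcompl : ordCompl[2] d = 1 := by
        by_contra h
        obtain ⟨q, hq, hqd⟩ := Nat.exists_prime_and_dvd h
        have hqmem : q ∈ d.primeFactors :=
          Nat.mem_primeFactors.mpr ⟨hq, hqd.trans (Nat.ordCompl_dvd d 2), hd.ne'⟩
        have hq2 : q = 2 := hodd q hqmem
        have : ¬ (2 ∣ ordCompl[2] d) := Nat.not_dvd_ordCompl Nat.prime_two hd.ne'
        exact this (hq2 ▸ hqd)
      have hda : d = 2^a := by rw [← hdc, hcompl, mul_one]
      rcases Nat.eq_zero_or_pos a with h0 | h1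
      · rw [hda, h0]
        norm_num [sqrt1Card_four]
      · have h4d : 4*d = 2^(a+2) := by rw [hda]; ring
        rw [h4d, sqrt1Card_two_pow (by omega), hda,
          Nat.primeFactors_prime_pow h1.ne' Nat.prime_two]
        norm_num
    · push_neg at hodd
      obtain ⟨p, hpmem, hp2⟩ := hodd
      have hp : p.Prime := Nat.prime_of_mem_primeFactors hpmem
      have hdvd : p ∣ d := Nat.dvd_of_mem_primeFactors hpmem
      set e := d.factorization p with he
      have he1 : 0 < e := hp.factorization_pos_of_dvd hd.ne' hdvd
      set d' := ordCompl[p] d with hd'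
      have hdd : p^e * d' = d := Nat.ordProj_mul_ordCompl_eq_self d p
      have hd'pos : 0 < d' := Nat.ordCompl_pos p hd.ne'
      have hd'lt : d' < d := Nat.div_lt_self hd (by
        calc 1 < p := hp.one_lt
        _ = p^1 := (pow_one p).symm
        _ ≤ p^e := Nat.pow_le_pow_right hp.pos he1)
      have hcp : Nat.Coprime p (4*d') := by
        rw [Nat.coprime_mul_iff_right]
        constructor
        · rw [hp.coprime_iff_not_dvd]
          intro h
          exact hp2 ((Nat.prime_dvd_prime_iff_eq hp Nat.prime_two).mp
            (hp.dvd_of_dvd_pow (show p ∣ 2^2 by norm_num; exact h)))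
        · exact Nat.coprime_ordCompl hp hd.ne'
      have hcop : Nat.Coprime (p^e) (4*d') := hcp.pow_left e
      have h4d : 4*d = p^e * (4*d') := by rw [← hdd]; ring
      have hpnotin : p ∉ d'.primeFactors := by
        intro hmem
        have := Nat.dvd_of_mem_primeFactors hmem
        have h1 := (Nat.coprime_ordCompl hp hd.ne').eq_one_of_dvd this
        exact hp.one_lt.ne' h1
      have hfac : d.primeFactors = insert p d'.primeFactors := by
        rw [← hdd, Nat.primeFactors_mul (pow_ne_zero e hp.pos.ne') hd'pos.ne',
          Nat.primeFactors_prime_pow he1.ne' hp]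
        rfl
      rw [h4d, sqrt1Card_mul hcop, sqrt1Card_odd_prime_pow hp hp2 he1,
        ih d' hd'lt hd'pos, hfac, Finset.card_insert_of_notMem hpnotin]
      ring

lemma qR_eq_iff {d : ℕ} (hd : 0 < d) (x y : ZMod (2*d)) :
    qR d x = qR d y ↔ (4*(d:ℤ)) ∣ ((x.val:ℤ)^2 - (y.val:ℤ)^2) := by
  have hd0 : ((2*d : ℚ)) ≠ 0 := by positivity
  unfold qR
  rw [QuotientAddGroup.eq]
  constructor
  · intro h
    obtain ⟨k, hk⟩ := AddSubgroup.mem_zmultiples_iff.mp h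
    rw [zsmul_eq_mul] at hk
    refine ⟨k, ?_⟩
    have : ((x.val:ℚ)^2 - (y.val:ℚ)^2) = 4*(d:ℚ)*k := by
      field_simp at hk
      linarith [hk]
    exact_mod_cast this
  · rintro ⟨k, hk⟩
    refine AddSubgroup.mem_zmultiples_iff.mpr ⟨k, ?_⟩
    rw [zsmul_eq_mul]
    have hQ : ((x.val:ℚ)^2 - (y.val:ℚ)^2) = 4*(d:ℚ)*k := by exact_mod_cast hk
    field_simp
    linarith [hQ]

lemma addEquiv_eq_mul {n : ℕ} (f : ZMod n ≃+ ZMod n) (x : ZMod n) : f 1 * x = f x := by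
  rw [mul_comm, ← x.intCast_zmod_cast, ← zsmul_eq_mul, ← map_zsmul, zsmul_one]

def orthEquivS {d : ℕ} (hd : 0 < d) :
    {φ : ZMod (2 * d) ≃+ ZMod (2 * d) // ∀ x, qR d (φ x) = qR d x} ≃
    {u : ZMod (2 * d) // (4*(d:ℤ)) ∣ ((u.val:ℤ)^2 - 1)} where
  toFun φ := ⟨φ.1 1, by
    haveI : Fact (1 < 2*d) := ⟨by omega⟩
    have h := (qR_eq_iff hd (φ.1 1) 1).mp (φ.2 1)
    rwa [ZMod.val_one, Nat.cast_one, one_pow] at h⟩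
  invFun u := by
    haveI : NeZero (2*d) := ⟨by omega⟩
    have huu : u.1 * u.1 = 1 := by
      have h2 : ((2*d : ℕ) : ℤ) ∣ ((u.1.val:ℤ)^2 - 1) :=
        dvd_trans ⟨2, by push_cast; ring⟩ u.2
      have : (((u.1.val:ℤ)^2 - 1 : ℤ) : ZMod (2*d)) = 0 :=
        (ZMod.intCast_zmod_eq_zero_iff_dvd _ _).mpr h2
      push_cast at this
      rw [ZMod.natCast_rightInverse u.1] at this
      have h3 : u.1^2 = 1 := by linear_combination this
      linear_combination h3
    refine ⟨{ toFun := fun x => u.1 * x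
              invFun := fun x => u.1 * x
              left_inv := fun x => by show u.1 * (u.1 * x) = x; rw [← mul_assoc, huu, one_mul]
              right_inv := fun x => by show u.1 * (u.1 * x) = x; rw [← mul_assoc, huu, one_mul]
              map_add' := mul_add u.1 }, ?_⟩
    intro x
    rw [qR_eq_iff hd]
    show (4*(d:ℤ)) ∣ (((u.1 * x).val : ℤ)^2 - (x.val:ℤ)^2)
    have hmod : ((2*d : ℕ) : ℤ) ∣ (((u.1 * x).val : ℤ) - (u.1.val : ℤ)*(x.val : ℤ)) := by
      rw [← ZMod.intCast_zmod_eq_zero_iff_dvd]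
      push_cast
      rw [ZMod.natCast_rightInverse (u.1 * x), ZMod.natCast_rightInverse u.1,
        ZMod.natCast_rightInverse x]
      ring
    obtain ⟨t, ht⟩ := hmod
    obtain ⟨s, hs⟩ := u.2
    push_cast at ht
    refine ⟨s*(x.val:ℤ)^2 + t*((u.1.val:ℤ)*(x.val:ℤ)) + d*t^2, ?_⟩
    linear_combination (((u.1 * x).val:ℤ) + (u.1.val:ℤ)*(x.val:ℤ) + 2*(d:ℤ)*t) * ht
      + (x.val:ℤ)^2 * hs
  left_inv φ := by
    apply Subtype.ext
    apply AddEquiv.ext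
    intro x
    exact addEquiv_eq_mul φ.1 x
  right_inv u := by
    apply Subtype.ext
    exact mul_one u.1

def coverEquiv {d : ℕ} (hd : 0 < d) :
    {x : ZMod (4*d) // x^2 = 1} ≃
    {u : ZMod (2*d) // (4*(d:ℤ)) ∣ ((u.val:ℤ)^2 - 1)} × Bool := by
  haveI hm : NeZero (4*d) := ⟨by omega⟩
  haveI hn : NeZero (2*d) := ⟨by omega⟩
  have hcast4 : ((4*d : ℕ) : ℤ) = 4*(d:ℤ) := by push_cast; ring
  have hdown : ∀ x : ZMod (4*d), x^2 = 1 →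
      (4*(d:ℤ)) ∣ (((((x.val : ℕ) : ZMod (2*d))).val : ℤ)^2 - 1) := by
    intro x hx
    have hx' : (4*(d:ℤ)) ∣ ((x.val:ℤ)^2 - 1) := by
      rw [← hcast4, ← ZMod.intCast_zmod_eq_zero_iff_dvd]
      push_cast
      rw [ZMod.natCast_rightInverse x]
      linear_combination hx
    obtain ⟨s, hs⟩ := hx'
    have hq : 2*d*(x.val / (2*d)) + x.val % (2*d) = x.val := Nat.div_add_mod x.val (2*d)
    have hv : ((x.val : ℕ) : ZMod (2*d)).val = x.val % (2*d) := ZMod.val_natCast _ _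
    set q : ℕ := x.val / (2*d) with hqdef
    have hqZ : 2*(d:ℤ)*(q:ℤ) + ((((x.val : ℕ) : ZMod (2*d))).val : ℤ) = (x.val:ℤ) := by
      rw [hv]; exact_mod_cast hq
    refine ⟨s - (q:ℤ)*(x.val:ℤ) + (d:ℤ)*(q:ℤ)^2, ?_⟩
    linear_combination (((((x.val : ℕ) : ZMod (2*d))).val : ℤ) + (x.val:ℤ) - 2*(d:ℤ)*(q:ℤ)) * hqZ + hs
  have hup : ∀ u : ZMod (2*d), (4*(d:ℤ)) ∣ ((u.val:ℤ)^2 - 1) →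
      (((u.val : ℕ) : ZMod (4*d)))^2 = 1 := by
    intro u hu
    have : ((((u.val:ℤ)^2 - 1 : ℤ)) : ZMod (4*d)) = 0 := by
      rw [ZMod.intCast_zmod_eq_zero_iff_dvd, hcast4]; exact hu
    push_cast at this
    linear_combination this
  have haddn : ∀ y : ZMod (4*d), (y + ((2*d : ℕ) : ZMod (4*d)))^2 = y^2 := by
    intro y
    have hnsq : ((2*d : ℕ) : ZMod (4*d)) * ((2*d : ℕ) : ZMod (4*d)) = 0 := by
      rw [← Nat.cast_mul, ZMod.natCast_eq_zero_iff]
      exact ⟨d, by ring⟩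
    have h2n : (2 : ZMod (4*d)) * ((2*d : ℕ) : ZMod (4*d)) = 0 := by
      rw [show (2 : ZMod (4*d)) = ((2:ℕ) : ZMod (4*d)) by push_cast; rfl, ← Nat.cast_mul,
        show (2*(2*d) : ℕ) = 4*d by ring, ZMod.natCast_self]
    have hexp : (y + ((2*d : ℕ) : ZMod (4*d)))^2
        = y^2 + (2 * ((2*d:ℕ) : ZMod (4*d))) * y
          + ((2*d:ℕ) : ZMod (4*d)) * ((2*d:ℕ) : ZMod (4*d)) := by ring
    rw [hexp, hnsq, h2n]; ring
  refine
  { toFun := fun x => (⟨((x.1.val : ℕ) : ZMod (2*d)), hdown x.1 x.2⟩, decide (x.1.val < 2*d))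
    invFun := fun p => ⟨((p.1.1.val : ℕ) : ZMod (4*d)) +
        (cond p.2 0 ((2*d : ℕ) : ZMod (4*d))), ?_⟩
    left_inv := ?_
    right_inv := ?_ }
  · rcases p with ⟨u, b⟩
    cases b
    · simp only [Bool.cond_false]
      rw [haddn]
      exact hup u.1 u.2
    · simp only [Bool.cond_true, add_zero]
      exact hup u.1 u.2
  · rintro ⟨x, hx⟩
    apply Subtype.ext
    simp only
    have hv : ((x.val : ℕ) : ZMod (2*d)).val = x.val % (2*d) := ZMod.val_natCast _ _
    by_cases h : x.val < 2*d
    · rw [show decide (x.val < 2*d) = true by simpa using h, Bool.cond_true, add_zero, hv,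
        Nat.mod_eq_of_lt h]
      exact ZMod.natCast_rightInverse x
    · rw [show decide (x.val < 2*d) = false by simpa using h, Bool.cond_false, hv,
        Nat.mod_eq_sub_mod (by omega),
        Nat.mod_eq_of_lt (by have := ZMod.val_lt x; omega), ← Nat.cast_add,
        Nat.sub_add_cancel (by omega)]
      exact ZMod.natCast_rightInverse x
  · rintro ⟨u, b⟩
    have huval : u.1.val < 2*d := ZMod.val_lt u.1
    cases b
    · have hval : (((u.1.val : ℕ) : ZMod (4*d)) + ((2*d : ℕ) : ZMod (4*d))).val
          = u.1.val + 2*d := by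
        rw [← Nat.cast_add, ZMod.val_natCast, Nat.mod_eq_of_lt (by omega)]
      refine Prod.ext ?_ ?_ <;> simp only [Bool.cond_false]
      · apply Subtype.ext
        show ((_ : ℕ) : ZMod (2*d)) = u.1
        rw [hval, Nat.cast_add, ZMod.natCast_self, add_zero]
        exact ZMod.natCast_rightInverse u.1
      · simp only [decide_eq_false_iff_not]
        rw [hval]
        omega
    · have hval : (((u.1.val : ℕ) : ZMod (4*d)) + 0).val = u.1.val := by
        rw [add_zero, ZMod.val_natCast, Nat.mod_eq_of_lt (by omega)]
      refine Prod.ext ?_ ?_ <;> simp only [Bool.cond_true]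
      · apply Subtype.ext
        show ((_ : ℕ) : ZMod (2*d)) = u.1
        rw [hval]
        exact ZMod.natCast_rightInverse u.1
      · simp only [decide_eq_true_iff]
        rw [hval]
        omega

/-- The orthogonal group of the discriminant form of `⟨-2d⟩` has order `2^{ω(d)}`. -/
theorem card_orthogonal_group_discriminant_form_neg2d (d : ℕ) (hd : 0 < d) :
    Nat.card {φ : ZMod (2 * d) ≃+ ZMod (2 * d) // ∀ x, qR d (φ x) = qR d x} =
      2 ^ d.primeFactors.card := by
  have h1 : Nat.card {φ : ZMod (2 * d) ≃+ ZMod (2 * d) // ∀ x, qR d (φ x) = qR d x}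
      = Nat.card {u : ZMod (2 * d) // (4*(d:ℤ)) ∣ ((u.val:ℤ)^2 - 1)} :=
    Nat.card_congr (orthEquivS hd)
  have h2 : sqrt1Card (4*d)
      = Nat.card {u : ZMod (2 * d) // (4*(d:ℤ)) ∣ ((u.val:ℤ)^2 - 1)} * 2 := by
    rw [sqrt1Card, Nat.card_congr (coverEquiv hd), Nat.card_prod]
    congr 1
    rw [Nat.card_eq_fintype_card]
    rfl
  have h3 := sqrt1Card_four_mul d hd
  have h4 : 2^(d.primeFactors.card + 1) = 2^(d.primeFactors.card) * 2 := by ring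
  omega
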